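/- Let X be a real normed linear space and α, β ∈ [0,1), α ≠ β, 0 < α+β < 1. Then ρ-orthogonality (vanishing of (ρ₋+ρ₊)/2) coincides with ρ_{α,β}-orthogonality on X if and only if X is smooth. -/

import Mathlib

noncomputable def rhoP {X : Type*} [NormedAddCommGroup X] [NormedSpace ℝ X] (u v : X) : ℝ :=
  Filter.limUnder (nhdsWithin (0:ℝ) (Set.Ioi 0)) (fun t : ℝ => (‖u + t • v‖^2 - ‖u‖^2) / (2*t))

noncomputable def rhoM {X : Type*} [NormedAddCommGroup X] [NormedSpace ℝ X] (u v : X) : ℝ :=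
  Filter.limUnder (nhdsWithin (0:ℝ) (Set.Iio 0)) (fun t : ℝ => (‖u + t • v‖^2 - ‖u‖^2) / (2*t))

noncomputable def rhoAB {X : Type*} [NormedAddCommGroup X] [NormedSpace ℝ X]
    (α β : ℝ) (u v : X) : ℝ := α * rhoM u v + β * rhoP u v

open Set Filter Topology

section helpers

variable {X : Type*} [NormedAddCommGroup X] [NormedSpace ℝ X]

private lemma convexN (u v : X) : ConvexOn ℝ Set.univ (fun t : ℝ => ‖u + t • v‖^2) := by
  have hf : ConvexOn ℝ Set.univ (fun t : ℝ => ‖u + t • v‖) := by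
    have h := (convexOn_univ_norm (E := X)).comp_affineMap (AffineMap.lineMap u (u + v))
    have : (Norm.norm ∘ (AffineMap.lineMap u (u + v) : ℝ →ᵃ[ℝ] X)) =
        fun t : ℝ => ‖u + t • v‖ := by
      funext t
      simp [Function.comp, AffineMap.lineMap_apply, add_comm]
    rw [this] at h
    simpa using h
  have := hf.pow (fun x _ => norm_nonneg _) 2
  exact this

private lemma slope_mono' (u v : X) {x y : ℝ} (hx : x ≠ 0) (hy : y ≠ 0) (hxy : x ≤ y) :
    slope (fun t : ℝ => ‖u + t • v‖^2) 0 x ≤ slope (fun t : ℝ => ‖u + t • v‖^2) 0 y := by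
  have := (convexN u v).secant_mono (Set.mem_univ 0) (Set.mem_univ x) (Set.mem_univ y) hx hy hxy
  simpa [slope_def_field] using this

private lemma q_eq_slope (u v : X) :
    (fun t : ℝ => (‖u + t • v‖^2 - ‖u‖^2) / (2*t)) =
      fun t : ℝ => slope (fun t : ℝ => ‖u + t • v‖^2) 0 t / 2 := by
  funext t
  rw [slope_def_field]
  simp only [zero_smul, add_zero, sub_zero]
  rw [div_div, mul_comm]

private lemma tendsto_rhoP (u v : X) :
    Tendsto (fun t : ℝ => (‖u + t • v‖^2 - ‖u‖^2) / (2*t)) (𝓝[>] (0:ℝ)) (𝓝 (rhoP u v)) := by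
  set N : ℝ → ℝ := fun t => ‖u + t • v‖^2 with hN
  have hmono : MonotoneOn (fun t : ℝ => slope N 0 t / 2) (Set.Ioi 0) := by
    intro x hx y hy hxy
    have := slope_mono' u v (ne_of_gt hx) (ne_of_gt hy) hxy
    linarith
  have hbdd : BddBelow ((fun t : ℝ => slope N 0 t / 2) '' Set.Ioi 0) := by
    refine ⟨slope N 0 (-1) / 2, ?_⟩
    rintro _ ⟨t, ht, rfl⟩
    have ht' : (0:ℝ) < t := ht
    have := slope_mono' u v (by norm_num : (-1:ℝ) ≠ 0) (ne_of_gt ht') (by linarith)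
    simpa using by linarith
  have htends := hmono.tendsto_nhdsGT hbdd
  have h2 : Tendsto (fun t : ℝ => (‖u + t • v‖^2 - ‖u‖^2) / (2*t)) (𝓝[>] (0:ℝ))
      (𝓝 (sInf ((fun t : ℝ => slope N 0 t / 2) '' Set.Ioi 0))) := by
    rw [q_eq_slope u v]; exact htends
  have : rhoP u v = sInf ((fun t : ℝ => slope N 0 t / 2) '' Set.Ioi 0) := h2.limUnder_eq
  rw [this]; exact h2

private lemma tendsto_rhoM (u v : X) :
    Tendsto (fun t : ℝ => (‖u + t • v‖^2 - ‖u‖^2) / (2*t)) (𝓝[<] (0:ℝ)) (𝓝 (rhoM u v)) := by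
  set N : ℝ → ℝ := fun t => ‖u + t • v‖^2 with hN
  have hmono : MonotoneOn (fun t : ℝ => slope N 0 t / 2) (Set.Iio 0) := by
    intro x hx y hy hxy
    have := slope_mono' u v (ne_of_lt hx) (ne_of_lt hy) hxy
    linarith
  have hbdd : BddAbove ((fun t : ℝ => slope N 0 t / 2) '' Set.Iio 0) := by
    refine ⟨slope N 0 1 / 2, ?_⟩
    rintro _ ⟨t, ht, rfl⟩
    have ht' : t < 0 := ht
    have := slope_mono' u v (ne_of_lt ht') (by norm_num : (1:ℝ) ≠ 0) (by linarith)
    simpa using by linarith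
  have htends := hmono.tendsto_nhdsLT hbdd
  have h2 : Tendsto (fun t : ℝ => (‖u + t • v‖^2 - ‖u‖^2) / (2*t)) (𝓝[<] (0:ℝ))
      (𝓝 (sSup ((fun t : ℝ => slope N 0 t / 2) '' Set.Iio 0))) := by
    rw [q_eq_slope u v]; exact htends
  have : rhoM u v = sSup ((fun t : ℝ => slope N 0 t / 2) '' Set.Iio 0) := h2.limUnder_eq
  rw [this]; exact h2

private lemma q_eq (u v : X) (s t : ℝ) (ht : t ≠ 0) (hc : 1 + t*s ≠ 0) :
    (‖u + t • (s•u+v)‖^2 - ‖u‖^2)/(2*t) =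
      (1+t*s) * ((‖u + (t/(1+t*s)) • v‖^2 - ‖u‖^2)/(2*(t/(1+t*s)))) + (s + t*s^2/2)*‖u‖^2 := by
  have hmul : (1+t*s) * (t/(1+t*s)) = t := by field_simp
  have hx : u + t • (s•u+v) = (1+t*s) • (u + (t/(1+t*s)) • v) := by
    rw [smul_add, smul_smul, smul_add, smul_smul, hmul, add_smul, one_smul]
    abel
  rw [hx, norm_smul, Real.norm_eq_abs, mul_pow, sq_abs]
  have hτ : t/(1+t*s) ≠ 0 := div_ne_zero ht hc
  field_simp
  ring

private lemma tendsto_q_shift (u v : X) (s : ℝ) {l : Filter ℝ} {L : ℝ}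
    (h0 : Tendsto (fun t : ℝ => t) l (𝓝 0))
    (hne : ∀ᶠ t in l, t ≠ 0)
    (hτ : Tendsto (fun t : ℝ => t/(1+t*s)) l l)
    (hL : Tendsto (fun t : ℝ => (‖u + t • v‖^2 - ‖u‖^2) / (2*t)) l (𝓝 L)) :
    Tendsto (fun t : ℝ => (‖u + t • (s•u+v)‖^2 - ‖u‖^2) / (2*t)) l (𝓝 (s*‖u‖^2 + L)) := by
  have h1 : Tendsto (fun t : ℝ => 1 + t*s) l (𝓝 1) := by
    have := (h0.mul_const s).const_add (1:ℝ)
    simpa using this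
  have hc : ∀ᶠ t in l, 1 + t*s ≠ 0 := h1.eventually_ne one_ne_zero
  have heq : ∀ᶠ t in l,
      (1+t*s) * ((‖u + (t/(1+t*s)) • v‖^2 - ‖u‖^2)/(2*(t/(1+t*s)))) + (s + t*s^2/2)*‖u‖^2 =
      (‖u + t • (s•u+v)‖^2 - ‖u‖^2) / (2*t) :=
    (hne.and hc).mono fun t ⟨ht, hct⟩ => (q_eq u v s t ht hct).symm
  have hcomp : Tendsto (fun t : ℝ =>
      (‖u + (t/(1+t*s)) • v‖^2 - ‖u‖^2)/(2*(t/(1+t*s)))) l (𝓝 L) := hL.comp hτ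
  have h2 : Tendsto (fun t : ℝ => s + t*s^2/2) l (𝓝 s) := by
    have := ((h0.mul_const (s^2)).div_const 2).const_add s
    simpa using this
  have h3 := (h1.mul hcomp).add (h2.mul_const (‖u‖^2))
  have h4 : (1:ℝ) * L + s * ‖u‖^2 = s*‖u‖^2 + L := by ring
  rw [h4] at h3
  exact h3.congr' heq

private lemma rhoP_shift (u v : X) (s : ℝ) : rhoP u (s•u+v) = s*‖u‖^2 + rhoP u v := by
  have h0 : Tendsto (fun t : ℝ => t) (𝓝[>] (0:ℝ)) (𝓝 0) :=
    tendsto_id.mono_left nhdsWithin_le_nhds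
  have h1 : Tendsto (fun t : ℝ => 1 + t*s) (𝓝[>] (0:ℝ)) (𝓝 1) := by
    have := (h0.mul_const s).const_add (1:ℝ)
    simpa using this
  have hcpos : ∀ᶠ t in 𝓝[>] (0:ℝ), 0 < 1 + t*s :=
    h1.eventually (eventually_gt_nhds one_pos)
  have hτ : Tendsto (fun t : ℝ => t/(1+t*s)) (𝓝[>] (0:ℝ)) (𝓝[>] (0:ℝ)) := by
    rw [tendsto_nhdsWithin_iff]
    constructor
    · have : Tendsto (fun t : ℝ => t/(1+t*s)) _ (𝓝 ((0:ℝ)/1)) := h0.div h1 one_ne_zero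
      simpa using this
    · filter_upwards [hcpos, self_mem_nhdsWithin] with t hct htpos
      exact div_pos htpos hct
  have hne : ∀ᶠ t in 𝓝[>] (0:ℝ), t ≠ 0 :=
    eventually_mem_nhdsWithin.mono fun t ht => ne_of_gt ht
  have h := tendsto_q_shift u v s h0 hne hτ (tendsto_rhoP u v)
  exact h.limUnder_eq

private lemma rhoM_shift (u v : X) (s : ℝ) : rhoM u (s•u+v) = s*‖u‖^2 + rhoM u v := by
  have h0 : Tendsto (fun t : ℝ => t) (𝓝[<] (0:ℝ)) (𝓝 0) :=
    tendsto_id.mono_left nhdsWithin_le_nhds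
  have h1 : Tendsto (fun t : ℝ => 1 + t*s) (𝓝[<] (0:ℝ)) (𝓝 1) := by
    have := (h0.mul_const s).const_add (1:ℝ)
    simpa using this
  have hcpos : ∀ᶠ t in 𝓝[<] (0:ℝ), 0 < 1 + t*s :=
    h1.eventually (eventually_gt_nhds one_pos)
  have hτ : Tendsto (fun t : ℝ => t/(1+t*s)) (𝓝[<] (0:ℝ)) (𝓝[<] (0:ℝ)) := by
    rw [tendsto_nhdsWithin_iff]
    constructor
    · have : Tendsto (fun t : ℝ => t/(1+t*s)) _ (𝓝 ((0:ℝ)/1)) := h0.div h1 one_ne_zero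
      simpa using this
    · filter_upwards [hcpos, self_mem_nhdsWithin] with t hct htneg
      exact div_neg_of_neg_of_pos htneg hct
  have hne : ∀ᶠ t in 𝓝[<] (0:ℝ), t ≠ 0 :=
    eventually_mem_nhdsWithin.mono fun t ht => ne_of_lt ht
  have h := tendsto_q_shift u v s h0 hne hτ (tendsto_rhoM u v)
  exact h.limUnder_eq

private lemma rhoP_zero_left (v : X) : rhoP (0:X) v = 0 := by
  have heq : ∀ᶠ t in 𝓝[>] (0:ℝ),
      t * ‖v‖^2 / 2 = (‖(0:X) + t • v‖^2 - ‖(0:X)‖^2) / (2*t) := by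
    filter_upwards [self_mem_nhdsWithin] with t ht
    have ht' : (t:ℝ) ≠ 0 := ne_of_gt ht
    rw [zero_add, norm_smul, Real.norm_eq_abs, mul_pow, sq_abs]
    field_simp
    simp
  have h0 : Tendsto (fun t : ℝ => t * ‖v‖^2 / 2) (𝓝[>] (0:ℝ)) (𝓝 0) := by
    have : Tendsto (fun t : ℝ => t) (𝓝[>] (0:ℝ)) (𝓝 0) :=
      tendsto_id.mono_left nhdsWithin_le_nhds
    have := (this.mul_const (‖v‖^2)).div_const 2
    simpa using this
  exact (h0.congr' heq).limUnder_eq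

private lemma rhoM_zero_left (v : X) : rhoM (0:X) v = 0 := by
  have heq : ∀ᶠ t in 𝓝[<] (0:ℝ),
      t * ‖v‖^2 / 2 = (‖(0:X) + t • v‖^2 - ‖(0:X)‖^2) / (2*t) := by
    filter_upwards [self_mem_nhdsWithin] with t ht
    have ht' : (t:ℝ) ≠ 0 := ne_of_lt ht
    rw [zero_add, norm_smul, Real.norm_eq_abs, mul_pow, sq_abs]
    field_simp
    simp
  have h0 : Tendsto (fun t : ℝ => t * ‖v‖^2 / 2) (𝓝[<] (0:ℝ)) (𝓝 0) := by
    have : Tendsto (fun t : ℝ => t) (𝓝[<] (0:ℝ)) (𝓝 0) :=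
      tendsto_id.mono_left nhdsWithin_le_nhds
    have := (this.mul_const (‖v‖^2)).div_const 2
    simpa using this
  exact (h0.congr' heq).limUnder_eq

end helpers

theorem stmt_9 {X : Type*} [NormedAddCommGroup X] [NormedSpace ℝ X]
    (α β : ℝ) (hα : α ∈ Set.Ico (0:ℝ) 1) (hβ : β ∈ Set.Ico (0:ℝ) 1)
    (hne : α ≠ β) (hab : 0 < α + β) (hab1 : α + β < 1) :
    (∀ u v : X, (rhoM u v + rhoP u v) / 2 = 0 ↔ rhoAB α β u v = 0) ↔
    (∀ u v : X, rhoM u v = rhoP u v) := by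
  constructor
  · intro H u v
    by_cases hu : u = 0
    · subst hu
      rw [rhoM_zero_left, rhoP_zero_left]
    · have hn : (0:ℝ) < ‖u‖^2 := pow_pos (norm_pos_iff.mpr hu) 2
      set a := rhoM u v with ha
      set b := rhoP u v with hb
      set s : ℝ := -((a+b)/(2*‖u‖^2)) with hs
      have hsn : s * ‖u‖^2 = -(a+b)/2 := by
        rw [hs]; field_simp
      have hM : rhoM u (s•u+v) = s*‖u‖^2 + a := rhoM_shift u v s
      have hP : rhoP u (s•u+v) = s*‖u‖^2 + b := rhoP_shift u v s
      have hzero : (rhoM u (s•u+v) + rhoP u (s•u+v)) / 2 = 0 := by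
        rw [hM, hP, hsn]; ring
      have hAB := (H u (s•u+v)).mp hzero
      rw [rhoAB, hM, hP, hsn] at hAB
      have key : (α - β) * (a - b) = 0 := by linear_combination 2*hAB
      rcases mul_eq_zero.mp key with h | h
      · exact absurd (sub_eq_zero.mp h) hne
      · exact sub_eq_zero.mp h
  · intro hs u v
    have h := hs u v
    rw [rhoAB, ← h]
    constructor
    · intro h'
      have hb : rhoM u v = 0 := by linarith
      rw [hb]; ring
    · intro h'
      have h2 : (α+β) * rhoM u v = 0 := by linarith
      have := (mul_eq_zero.mp h2).resolve_left (ne_of_gt hab)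
      rw [this]; ring
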